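/- Convergence rate of the cyclic zero-shifting algorithm: fix W₀ ∈ ℝ^D and N ≥ 1, and define iterates for n = 0, …, N−1 by W_{2n+1} := W_{2n} + Δ·F(W_{2n}) − Δ·G(W_{2n}) (up pulse) and W_{2n+2} := W_{2n+1} − Δ·F(W_{2n+1}) − Δ·G(W_{2n+1}) (down pulse). Then (1/(2N))·Σ_{n=0}^{2N−1} ‖G(W_n)‖² ≤ (φ(W₀) − φ*)/(2N·Δ) + (3/2)·Δ·L_q·q_max². -/

import Mathlib

noncomputable section

open scoped BigOperators

open scoped InnerProductSpace

set_option maxHeartbeats 1000000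

lemma descent_lemma {E : Type*} [NormedAddCommGroup E] [InnerProductSpace ℝ E]
    [CompleteSpace E]
    (φ : E → ℝ) (G : E → E) (L : ℝ)
    (hgrad : ∀ Wp, HasGradientAt φ (G Wp) Wp)
    (hLip : ∀ U V, ‖G U - G V‖ ≤ L * ‖U - V‖) (x d : E) :
    φ (x + d) ≤ φ x + ⟪G x, d⟫_ℝ + L / 2 * ‖d‖ ^ 2 := by
  set g : ℝ → ℝ := fun t => φ (x + t • d) - t * ⟪G x, d⟫_ℝ - L / 2 * t ^ 2 * ‖d‖ ^ 2 with hgdef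
  have hder : ∀ t : ℝ, HasDerivAt g
      (⟪G (x + t • d), d⟫_ℝ - ⟪G x, d⟫_ℝ - L * t * ‖d‖ ^ 2) t := by
    intro t
    have hc : HasDerivAt (fun t : ℝ => x + t • d) d t := by
      simpa using ((hasDerivAt_id t).smul_const d).const_add x
    have h1 : HasDerivAt (fun t : ℝ => φ (x + t • d)) ⟪G (x + t • d), d⟫_ℝ t := by
      have := ((hgrad (x + t • d)).hasFDerivAt).comp_hasDerivAt t hc
      simp at this
      exact this
    have h2 : HasDerivAt (fun t : ℝ => t * ⟪G x, d⟫_ℝ) ⟪G x, d⟫_ℝ t := by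
      simpa using (hasDerivAt_id t).mul_const ⟪G x, d⟫_ℝ
    have h3 : HasDerivAt (fun t : ℝ => L / 2 * t ^ 2 * ‖d‖ ^ 2) (L * t * ‖d‖ ^ 2) t := by
      have := ((hasDerivAt_pow 2 t).const_mul (L / 2)).mul_const (‖d‖ ^ 2)
      exact this.congr_deriv (by push_cast; ring)
    exact (h1.sub h2).sub h3
  have hanti : AntitoneOn g (Set.Icc 0 1) := by
    apply antitoneOn_of_deriv_nonpos (convex_Icc 0 1)
    · exact (continuous_iff_continuousAt.2 fun t => (hder t).continuousAt).continuousOn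
    · exact fun t _ => (hder t).differentiableAt.differentiableWithinAt
    · intro t ht
      rw [interior_Icc] at ht
      rw [(hder t).deriv]
      have h1 : ⟪G (x + t • d) - G x, d⟫_ℝ ≤ ‖G (x + t • d) - G x‖ * ‖d‖ :=
        real_inner_le_norm _ _
      have h2 : ‖G (x + t • d) - G x‖ ≤ L * (t * ‖d‖) := by
        have := hLip (x + t • d) x
        simpa [norm_smul, abs_of_pos ht.1, mul_assoc] using this
      have h3 : ⟪G (x + t • d) - G x, d⟫_ℝ = ⟪G (x + t • d), d⟫_ℝ - ⟪G x, d⟫_ℝ := by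
        rw [inner_sub_left]
      nlinarith [norm_nonneg d, ht.1.le]
  have := hanti (Set.left_mem_Icc.2 zero_le_one) (Set.right_mem_Icc.2 zero_le_one) zero_le_one
  simp only [hgdef] at this
  simp only [zero_smul, one_smul, add_zero] at this
  nlinarith [this]

/-- Convergence rate of the cyclic zero-shifting algorithm: along the alternating
up/down pulse iterates, the average of `‖G(W_n)‖²` over the first `2N` iterates
is at most `(φ(W₀) − φ*)/(2NΔ) + (3/2) Δ L_q q_max²`. -/
theorem cyclic_zero_shifting_convergence_rate
    (D : ℕ) (hD : 1 ≤ D) (Δ qmax Lq : ℝ) (hΔ : 0 < Δ) (hq : 0 < qmax) (hLq : 0 < Lq)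
    (Qp Qm : EuclideanSpace ℝ (Fin D) → EuclideanSpace ℝ (Fin D))
    (hQpLip : ∀ U V, ‖Qp U - Qp V‖ ≤ Lq * ‖U - V‖)
    (hQmLip : ∀ U V, ‖Qm U - Qm V‖ ≤ Lq * ‖U - V‖)
    (hQp : ∀ W, ‖Qp W‖ ≤ qmax) (hQm : ∀ W, ‖Qm W‖ ≤ qmax)
    (F G : EuclideanSpace ℝ (Fin D) → EuclideanSpace ℝ (Fin D))
    (hF : ∀ W, F W = (1 / 2 : ℝ) • (Qm W + Qp W))
    (hG : ∀ W, G W = (1 / 2 : ℝ) • (Qm W - Qp W))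
    (φ : EuclideanSpace ℝ (Fin D) → ℝ) (φstar : ℝ)
    (hgrad : ∀ W, HasGradientAt φ (G W) W)
    (hgradLip : ∀ U V, ‖G U - G V‖ ≤ Lq * ‖U - V‖)
    (hlb : ∀ W, φstar ≤ φ W)
    (N : ℕ) (hN : 1 ≤ N)
    (W : ℕ → EuclideanSpace ℝ (Fin D))
    (hup : ∀ n < N, W (2 * n + 1) = W (2 * n) + Δ • F (W (2 * n)) - Δ • G (W (2 * n)))
    (hdown : ∀ n < N,
      W (2 * n + 2) = W (2 * n + 1) - Δ • F (W (2 * n + 1)) - Δ • G (W (2 * n + 1))) :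
    (1 / (2 * N : ℝ)) * ∑ n ∈ Finset.range (2 * N), ‖G (W n)‖ ^ 2
      ≤ (φ (W 0) - φstar) / (2 * N * Δ) + (3 / 2) * Δ * Lq * qmax ^ 2 := by
  -- basic bounds
  have hGb : ∀ Wp, ‖G Wp‖ ≤ qmax := by
    intro Wp
    rw [hG]
    rw [norm_smul]
    calc ‖(1/2 : ℝ)‖ * ‖Qm Wp - Qp Wp‖ ≤ (1/2) * (‖Qm Wp‖ + ‖Qp Wp‖) := by
          rw [Real.norm_eq_abs, abs_of_pos (by norm_num : (0:ℝ) < 1/2)]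
          have := norm_sub_le (Qm Wp) (Qp Wp)
          linarith
      _ ≤ qmax := by have := hQm Wp; have := hQp Wp; linarith
  have hFb : ∀ Wp, ‖F Wp‖ ≤ qmax := by
    intro Wp
    rw [hF, norm_smul]
    calc ‖(1/2 : ℝ)‖ * ‖Qm Wp + Qp Wp‖ ≤ (1/2) * (‖Qm Wp‖ + ‖Qp Wp‖) := by
          rw [Real.norm_eq_abs, abs_of_pos (by norm_num : (0:ℝ) < 1/2)]
          have := norm_add_le (Qm Wp) (Qp Wp)
          linarith
      _ ≤ qmax := by have := hQm Wp; have := hQp Wp; linarith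
  have hFLip : ∀ U V, ‖F U - F V‖ ≤ Lq * ‖U - V‖ := by
    intro U V
    have heq : F U - F V = (1/2 : ℝ) • ((Qm U - Qm V) + (Qp U - Qp V)) := by
      rw [hF, hF]; module
    rw [heq, norm_smul, Real.norm_eq_abs, abs_of_pos (by norm_num : (0:ℝ) < 1/2)]
    have h1 := norm_add_le (Qm U - Qm V) (Qp U - Qp V)
    have h2 := hQmLip U V
    have h3 := hQpLip U V
    linarith
  have hFmG : ∀ Wp, F Wp - G Wp = Qp Wp := by
    intro Wp; rw [hF, hG]; module
  have hFpG : ∀ Wp, F Wp + G Wp = Qm Wp := by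
    intro Wp; rw [hF, hG]; module
  -- pair inequality
  have key : ∀ n < N, φ (W (2*n+2)) + Δ * (‖G (W (2*n))‖^2 + ‖G (W (2*n+1))‖^2)
      ≤ φ (W (2*n)) + 3 * Lq * Δ^2 * qmax^2 := by
    intro n hn
    set x := W (2*n) with hx
    set x' := W (2*n+1) with hx'
    have hup' : x' = x + Δ • Qp x := by
      rw [hx', hup n hn, add_sub_assoc, ← smul_sub, hFmG]
    have hdown' : W (2*n+2) = x' + (-(Δ • Qm x')) := by
      rw [hdown n hn, sub_sub, ← smul_add, hFpG]
      abel
    have h1 : φ x' ≤ φ x + ⟪G x, Δ • Qp x⟫_ℝ + Lq / 2 * ‖Δ • Qp x‖ ^ 2 := by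
      rw [hup']
      exact descent_lemma φ G Lq hgrad hgradLip x (Δ • Qp x)
    have h2 : φ (W (2*n+2)) ≤ φ x' + ⟪G x', -(Δ • Qm x')⟫_ℝ + Lq / 2 * ‖Δ • Qm x'‖ ^ 2 := by
      rw [hdown']
      have := descent_lemma φ G Lq hgrad hgradLip x' (-(Δ • Qm x'))
      simpa [norm_neg] using this
    -- rewrite inner products
    have e1 : ⟪G x, Δ • Qp x⟫_ℝ = Δ * (⟪G x, F x⟫_ℝ - ‖G x‖^2) := by
      rw [real_inner_smul_right]
      congr 1
      rw [← hFmG x, inner_sub_right, real_inner_self_eq_norm_sq]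
    have e2 : ⟪G x', -(Δ • Qm x')⟫_ℝ = -(Δ * (⟪G x', F x'⟫_ℝ + ‖G x'‖^2)) := by
      rw [inner_neg_right, real_inner_smul_right]
      congr 2
      rw [← hFpG x', inner_add_right, real_inner_self_eq_norm_sq]
    -- cross term bound
    have hxx' : ‖x - x'‖ ≤ Δ * qmax := by
      rw [hup']
      have : x - (x + Δ • Qp x) = -(Δ • Qp x) := by abel
      rw [this, norm_neg, norm_smul, Real.norm_eq_abs, abs_of_pos hΔ]
      exact mul_le_mul_of_nonneg_left (hQp x) hΔ.le
    have h3 : ⟪G x, F x⟫_ℝ - ⟪G x', F x'⟫_ℝ ≤ 2 * Lq * qmax * (Δ * qmax) := by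
      have split : ⟪G x, F x⟫_ℝ - ⟪G x', F x'⟫_ℝ
          = ⟪G x - G x', F x⟫_ℝ + ⟪G x', F x - F x'⟫_ℝ := by
        rw [inner_sub_left, inner_sub_right]; ring
      have b1 : ⟪G x - G x', F x⟫_ℝ ≤ ‖G x - G x'‖ * ‖F x‖ := real_inner_le_norm _ _
      have b2 : ⟪G x', F x - F x'⟫_ℝ ≤ ‖G x'‖ * ‖F x - F x'‖ := real_inner_le_norm _ _
      have c1 : ‖G x - G x'‖ * ‖F x‖ ≤ (Lq * ‖x - x'‖) * qmax :=
        mul_le_mul (hgradLip x x') (hFb x) (norm_nonneg _)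
          (mul_nonneg hLq.le (norm_nonneg _))
      have c2 : ‖G x'‖ * ‖F x - F x'‖ ≤ qmax * (Lq * ‖x - x'‖) :=
        mul_le_mul (hGb x') (hFLip x x') (norm_nonneg _) hq.le
      have d1 : Lq * ‖x - x'‖ ≤ Lq * (Δ * qmax) :=
        mul_le_mul_of_nonneg_left hxx' hLq.le
      nlinarith [norm_nonneg (x - x'), hq.le, hLq.le]
    have n1 : ‖Δ • Qp x‖ ^ 2 ≤ Δ^2 * qmax^2 := by
      rw [norm_smul, Real.norm_eq_abs, abs_of_pos hΔ, mul_pow]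
      exact mul_le_mul_of_nonneg_left (by nlinarith [hQp x, norm_nonneg (Qp x)]) (by positivity)
    have n2 : ‖Δ • Qm x'‖ ^ 2 ≤ Δ^2 * qmax^2 := by
      rw [norm_smul, Real.norm_eq_abs, abs_of_pos hΔ, mul_pow]
      exact mul_le_mul_of_nonneg_left (by nlinarith [hQm x', norm_nonneg (Qm x')]) (by positivity)
    rw [e1] at h1
    rw [e2] at h2
    nlinarith [h1, h2, h3, n1, n2, hΔ.le, hLq.le]
  -- telescoping
  have tele : ∀ M : ℕ, M ≤ N →
      φ (W (2*M)) + Δ * ∑ n ∈ Finset.range (2*M), ‖G (W n)‖^2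
        ≤ φ (W 0) + M * (3 * Lq * Δ^2 * qmax^2) := by
    intro M
    induction M with
    | zero => intro _; simp
    | succ m ih =>
      intro hM
      have ihm := ih (Nat.le_of_succ_le hM)
      have hk := key m (Nat.lt_of_succ_le hM)
      have hrange : 2 * (m + 1) = (2 * m + 1) + 1 := by ring
      rw [hrange, Finset.sum_range_succ, Finset.sum_range_succ]
      have h2m2 : 2 * m + 1 + 1 = 2 * m + 2 := by ring
      rw [h2m2]
      push_cast
      nlinarith [hΔ.le]
  have htele := tele N le_rfl
  have hlbN := hlb (W (2*N))
  set S := ∑ n ∈ Finset.range (2*N), ‖G (W n)‖^2 with hS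
  have hNpos : (0:ℝ) < N := by exact_mod_cast Nat.lt_of_lt_of_le Nat.zero_lt_one hN
  have hmain : Δ * S ≤ (φ (W 0) - φstar) + N * (3 * Lq * Δ^2 * qmax^2) := by linarith
  have h2NΔ : (0:ℝ) < 2 * N * Δ := by positivity
  calc (1 / (2 * N : ℝ)) * S = (Δ * S) / (2 * N * Δ) := by
        field_simp
    _ ≤ ((φ (W 0) - φstar) + N * (3 * Lq * Δ^2 * qmax^2)) / (2 * N * Δ) :=
        (div_le_div_iff_of_pos_right h2NΔ).mpr hmain
    _ = (φ (W 0) - φstar) / (2 * N * Δ) + (3 / 2) * Δ * Lq * qmax ^ 2 := by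
        field_simp
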